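/- Let p be a probability distribution on a finite alphabet X and r ≥ 0. Then sup_{0 ≤ α ≤ 1} (1−α)·(r − H_α(p)) = inf_{q ∈ Q(X)} [ D(q‖p) + max{0, r − H(q) − D(q‖p)} ], where H_α(p) = (1/(1−α)) log₂ ∑_x p(x)^α is the Rényi entropy, H(q) is the Shannon entropy and D is relative entropy (all base 2), and the supremum is interpreted via the continuous extension at α = 1. -/

import Mathlib

/-- `p` is a probability distribution on the finite set `X`. -/
def IsProb {X : Type*} [Fintype X] (p : X → ℝ) : Prop :=
  (∀ x, 0 ≤ p x) ∧ ∑ x, p x = 1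

/-- Base-2 Shannon entropy. -/
noncomputable def shannonEntropy {X : Type*} [Fintype X] (t : X → ℝ) : ℝ :=
  -∑ x, t x * Real.logb 2 (t x)

/-- Base-2 relative entropy (Kullback–Leibler divergence). -/
noncomputable def Dkl {X : Type*} [Fintype X] (t p : X → ℝ) : ℝ :=
  ∑ x, t x * Real.logb 2 (t x / p x)

/-- Rényi entropy `H_α(p) = (1/(1-α)) log₂ ∑_{x ∈ supp p} p(x)^α` for `α ∈ [0,1)`,
continuously extended by the Shannon entropy at `α = 1`. -/
noncomputable def renyiEntropy {X : Type*} [Fintype X] (α : ℝ) (p : X → ℝ) : ℝ :=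
  if α = 1 then shannonEntropy p
  else (1 / (1 - α)) * Real.logb 2 (∑ x, if p x = 0 then 0 else p x ^ α)

/-! ### Auxiliary lemmas -/

lemma gibbs {X : Type*} [Fintype X] (q a : X → ℝ) (hq0 : ∀ x, 0 ≤ q x)
    (hq1 : ∑ x, q x = 1) (ha0 : ∀ x, 0 ≤ a x) (hqa : ∀ x, q x ≠ 0 → a x ≠ 0) :
    ∑ x, q x * Real.logb 2 (a x / q x) ≤ Real.logb 2 (∑ x, a x) := by
  set A := ∑ x, a x with hA
  have hx0 : ∃ x, q x ≠ 0 := by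
    by_contra h
    push_neg at h
    simp [h] at hq1
  obtain ⟨x0, hx0⟩ := hx0
  have hax0 : 0 < a x0 := (ha0 x0).lt_of_ne' (hqa x0 hx0)
  have hApos : 0 < A :=
    lt_of_lt_of_le hax0 (Finset.single_le_sum (fun x _ => ha0 x) (Finset.mem_univ x0))
  have hlog2 : 0 < Real.log 2 := Real.log_pos one_lt_two
  have key : ∀ x, q x * Real.logb 2 (a x / q x) - q x * Real.logb 2 A
      ≤ (a x / A - q x) / Real.log 2 := by
    intro x
    rcases eq_or_ne (q x) 0 with h | h
    · rw [h]
      simp only [zero_mul, sub_zero, sub_self]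
      have := ha0 x
      positivity
    · have hqx : 0 < q x := (hq0 x).lt_of_ne' h
      have hax : 0 < a x := (ha0 x).lt_of_ne' (hqa x h)
      have e1 : q x * Real.logb 2 (a x / q x) - q x * Real.logb 2 A
          = q x * (Real.log (a x / (q x * A)) / Real.log 2) := by
        rw [Real.logb, Real.logb, Real.log_div hax.ne' hqx.ne',
          Real.log_div hax.ne' (by positivity), Real.log_mul hqx.ne' hApos.ne']
        ring
      rw [e1]
      have hlt : Real.log (a x / (q x * A)) ≤ a x / (q x * A) - 1 :=
        Real.log_le_sub_one_of_pos (by positivity)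
      have : q x * (Real.log (a x / (q x * A)) / Real.log 2)
          ≤ q x * ((a x / (q x * A) - 1) / Real.log 2) := by
        gcongr
      refine this.trans (le_of_eq ?_)
      field_simp
  have hsum := Finset.sum_le_sum (fun x (_ : x ∈ Finset.univ) => key x)
  rw [Finset.sum_sub_distrib, ← Finset.sum_mul, hq1, one_mul] at hsum
  have hrhs : ∑ x, (a x / A - q x) / Real.log 2 = 0 := by
    rw [← Finset.sum_div, Finset.sum_sub_distrib, ← Finset.sum_div, hq1, ← hA,
      div_self hApos.ne']
    simp
  rw [hrhs] at hsum
  linarith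

lemma dkl_nonneg {X : Type*} [Fintype X] (q p : X → ℝ) (hp : IsProb p) (hq : IsProb q)
    (hac : ∀ x, p x = 0 → q x = 0) : 0 ≤ Dkl q p := by
  have hqp : ∀ x, q x ≠ 0 → p x ≠ 0 := fun x hqx hpx => hqx (hac x hpx)
  have h := gibbs q p hq.1 hq.2 hp.1 hqp
  rw [hp.2, Real.logb_one] at h
  have e : Dkl q p = -∑ x, q x * Real.logb 2 (p x / q x) := by
    unfold Dkl
    rw [← Finset.sum_neg_distrib]
    refine Finset.sum_congr rfl fun x _ => ?_
    rcases eq_or_ne (q x) 0 with h0 | h0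
    · simp [h0]
    · have hpx : p x ≠ 0 := hqp x h0
      rw [show q x / p x = (p x / q x)⁻¹ by field_simp, Real.logb_inv]
      ring
  rw [e]
  linarith

lemma convex_comb_le_max (α D m : ℝ) (h0 : 0 ≤ α) (h1 : α ≤ 1) :
    α * D + (1 - α) * m ≤ D + max 0 (m - D) := by
  have h2 : D + max 0 (m - D) = max D m := by
    rcases le_total m D with h | h
    · rw [max_eq_left (by linarith), max_eq_left h]
      ring
    · rw [max_eq_right (by linarith), max_eq_right h]
      ring
  rw [h2]
  nlinarith [le_max_left D m, le_max_right D m]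

lemma easy_dir {X : Type*} [Fintype X] (p q : X → ℝ) (hp : IsProb p) (hq : IsProb q)
    (hac : ∀ x, p x = 0 → q x = 0) (r α : ℝ) (hα : α ∈ Set.Icc (0:ℝ) 1) :
    (1 - α) * (r - renyiEntropy α p)
      ≤ Dkl q p + max 0 (r - shannonEntropy q - Dkl q p) := by
  obtain ⟨hα0, hα1⟩ := hα
  have hDnn := dkl_nonneg q p hp hq hac
  rcases eq_or_ne α 1 with h1 | h1
  · subst h1
    simp only [sub_self, zero_mul]
    have := le_max_left (0:ℝ) (r - shannonEntropy q - Dkl q p)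
    linarith
  · have hα1' : α < 1 := lt_of_le_of_ne hα1 h1
    set a : X → ℝ := fun x => if p x = 0 then 0 else p x ^ α with ha
    have ha0 : ∀ x, 0 ≤ a x := by
      intro x
      by_cases h : p x = 0 <;> simp [ha, h]
      exact Real.rpow_nonneg (hp.1 x) α
    have hqa : ∀ x, q x ≠ 0 → a x ≠ 0 := by
      intro x hqx
      have hpx : p x ≠ 0 := fun hpx => hqx (hac x hpx)
      have hpp : 0 < p x := (hp.1 x).lt_of_ne' hpx
      simp [ha, hpx]
      positivity
    have hg := gibbs q a hq.1 hq.2 ha0 hqa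
    have hsum2 : (1 - α) * shannonEntropy q - α * Dkl q p
        = ∑ x, (-((1 - α) * (q x * Real.logb 2 (q x))) - α * (q x * Real.logb 2 (q x / p x))) := by
      unfold shannonEntropy Dkl
      rw [mul_neg, Finset.mul_sum, Finset.mul_sum, ← Finset.sum_neg_distrib,
        ← Finset.sum_sub_distrib]
    have hsum : ∑ x, q x * Real.logb 2 (a x / q x)
        = (1 - α) * shannonEntropy q - α * Dkl q p := by
      rw [hsum2]
      refine Finset.sum_congr rfl fun x _ => ?_
      rcases eq_or_ne (q x) 0 with h0 | h0
      · simp [h0]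
      · have hpx : p x ≠ 0 := fun hpx => h0 (hac x hpx)
        have hpp : 0 < p x := (hp.1 x).lt_of_ne' hpx
        have hqq : 0 < q x := (hq.1 x).lt_of_ne' h0
        have haa : a x = p x ^ α := by simp [ha, hpx]
        rw [haa, Real.logb_div (by positivity) h0, Real.logb_div h0 hpx,
          Real.logb, Real.log_rpow hpp]
        rw [Real.logb, Real.logb]
        ring
    have hren : renyiEntropy α p
        = (1 / (1 - α)) * Real.logb 2 (∑ x, a x) := by
      rw [renyiEntropy, if_neg h1]
    have key : (1 - α) * shannonEntropy q - α * Dkl q p ≤ Real.logb 2 (∑ x, a x) := by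
      rw [← hsum]; exact hg
    have hstep : (1 - α) * (r - renyiEntropy α p)
        ≤ α * Dkl q p + (1 - α) * (r - shannonEntropy q) := by
      rw [hren]
      have h1α : (1 - α) ≠ 0 := by linarith
      have : (1 - α) * ((1 / (1 - α)) * Real.logb 2 (∑ x, a x))
          = Real.logb 2 (∑ x, a x) := by field_simp
      nlinarith [key]
    refine hstep.trans ?_
    have := convex_comb_le_max α (Dkl q p) (r - shannonEntropy q) hα0 hα1
    linarith

noncomputable def Zf {X : Type*} [Fintype X] (p : X → ℝ) (α : ℝ) : ℝ :=
  ∑ x, if p x = 0 then 0 else p x ^ α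

noncomputable def Tf {X : Type*} [Fintype X] (p : X → ℝ) (α : ℝ) : ℝ :=
  ∑ x, if p x = 0 then 0 else p x ^ α * Real.logb 2 (p x)

noncomputable def qt {X : Type*} [Fintype X] (p : X → ℝ) (α : ℝ) (x : X) : ℝ :=
  if p x = 0 then 0 else p x ^ α / Zf p α

section tilted
variable {X : Type*} [Fintype X] (p : X → ℝ) (α : ℝ)

lemma Zf_pos (hp : IsProb p) : 0 < Zf p α := by
  unfold Zf
  have hx0 : ∃ x, p x ≠ 0 := by
    by_contra h
    push_neg at h
    have := hp.2
    simp [h] at this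
  obtain ⟨x0, hx0⟩ := hx0
  have hpp : 0 < p x0 := (hp.1 x0).lt_of_ne' hx0
  have hterm : (0:ℝ) < if p x0 = 0 then 0 else p x0 ^ α := by
    rw [if_neg hx0]; positivity
  refine lt_of_lt_of_le hterm (Finset.single_le_sum
    (f := fun x => if p x = 0 then 0 else p x ^ α) (fun x _ => ?_) (Finset.mem_univ x0))
  show (0:ℝ) ≤ if p x = 0 then 0 else p x ^ α
  by_cases h : p x = 0
  · simp [h]
  · have : 0 < p x := (hp.1 x).lt_of_ne' h
    rw [if_neg h]; positivity

lemma qt_prob (hp : IsProb p) : IsProb (qt p α) := by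
  have hZ := Zf_pos p α hp
  constructor
  · intro x
    by_cases h : p x = 0
    · simp [qt, h]
    · have : 0 < p x := (hp.1 x).lt_of_ne' h
      rw [qt, if_neg h]; positivity
  · have : ∑ x, qt p α x = (∑ x, if p x = 0 then 0 else p x ^ α) / Zf p α := by
      rw [Finset.sum_div]
      refine Finset.sum_congr rfl fun x _ => ?_
      by_cases h : p x = 0 <;> simp [qt, h]
    rw [this]
    exact div_self hZ.ne'

lemma qt_ac : ∀ x, p x = 0 → qt p α x = 0 := fun x h => by simp [qt, h]

lemma shannon_qt (hp : IsProb p) :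
    shannonEntropy (qt p α) = -(α * Tf p α / Zf p α) + Real.logb 2 (Zf p α) := by
  have hZ := Zf_pos p α hp
  have key : ∀ x, qt p α x * Real.logb 2 (qt p α x)
      = (α * (if p x = 0 then 0 else p x ^ α * Real.logb 2 (p x))
        - Real.logb 2 (Zf p α) * (if p x = 0 then 0 else p x ^ α)) / Zf p α := by
    intro x
    by_cases h : p x = 0
    · simp [qt, h]
    · have hpp : 0 < p x := (hp.1 x).lt_of_ne' h
      rw [qt, if_neg h, if_neg h, if_neg h,
        Real.logb_div (by positivity) hZ.ne', Real.logb, Real.log_rpow hpp,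
        Real.logb, Real.logb]
      field_simp
  unfold shannonEntropy
  rw [Finset.sum_congr rfl fun x _ => key x, ← Finset.sum_div,
    Finset.sum_sub_distrib, ← Finset.mul_sum, ← Finset.mul_sum]
  rw [show (∑ x, if p x = 0 then 0 else p x ^ α * Real.logb 2 (p x)) = Tf p α from rfl,
    show (∑ x, if p x = 0 then 0 else p x ^ α) = Zf p α from rfl]
  field_simp
  ring

lemma dkl_qt (hp : IsProb p) :
    Dkl (qt p α) p = (α - 1) * Tf p α / Zf p α - Real.logb 2 (Zf p α) := by
  have hZ := Zf_pos p α hp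
  have key : ∀ x, qt p α x * Real.logb 2 (qt p α x / p x)
      = ((α - 1) * (if p x = 0 then 0 else p x ^ α * Real.logb 2 (p x))
        - Real.logb 2 (Zf p α) * (if p x = 0 then 0 else p x ^ α)) / Zf p α := by
    intro x
    by_cases h : p x = 0
    · simp [qt, h]
    · have hpp : 0 < p x := (hp.1 x).lt_of_ne' h
      rw [qt, if_neg h, if_neg h, if_neg h]
      rw [div_div, Real.logb_div (by positivity) (by positivity),
        Real.logb_mul hZ.ne' h, Real.logb, Real.log_rpow hpp, Real.logb, Real.logb]
      field_simp
      ring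
  unfold Dkl
  rw [Finset.sum_congr rfl fun x _ => key x, ← Finset.sum_div,
    Finset.sum_sub_distrib, ← Finset.mul_sum, ← Finset.mul_sum]
  rw [show (∑ x, if p x = 0 then 0 else p x ^ α * Real.logb 2 (p x)) = Tf p α from rfl,
    show (∑ x, if p x = 0 then 0 else p x ^ α) = Zf p α from rfl]
  field_simp

lemma phi_cont (hp : IsProb p) : Continuous (fun β : ℝ => -Tf p β / Zf p β) := by
  have hZc : Continuous (Zf p) := by
    unfold Zf
    refine continuous_finset_sum _ fun x _ => ?_
    by_cases h : p x = 0
    · simp [h]; exact continuous_const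
    · have hpp : 0 < p x := (hp.1 x).lt_of_ne' h
      simp only [if_neg h]
      have : (fun β : ℝ => p x ^ β) = fun β => Real.exp (Real.log (p x) * β) := by
        funext β
        rw [Real.rpow_def_of_pos hpp]
      rw [this]
      exact Real.continuous_exp.comp (continuous_const.mul continuous_id)
  have hTc : Continuous (Tf p) := by
    unfold Tf
    refine continuous_finset_sum _ fun x _ => ?_
    by_cases h : p x = 0
    · simp [h]; exact continuous_const
    · have hpp : 0 < p x := (hp.1 x).lt_of_ne' h
      simp only [if_neg h]
      have : (fun β : ℝ => p x ^ β * Real.logb 2 (p x))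
          = fun β => Real.exp (Real.log (p x) * β) * Real.logb 2 (p x) := by
        funext β
        rw [Real.rpow_def_of_pos hpp]
      rw [this]
      exact (Real.continuous_exp.comp (continuous_const.mul continuous_id)).mul
        continuous_const
  exact (hTc.neg).div hZc (fun β => (Zf_pos p β hp).ne')

lemma Zf_one (hp : IsProb p) : Zf p 1 = 1 := by
  have e : Zf p 1 = ∑ x, p x := by
    unfold Zf
    refine Finset.sum_congr rfl fun x _ => ?_
    by_cases h : p x = 0
    · simp [h]
    · rw [if_neg h, Real.rpow_one]
  rw [e, hp.2]

lemma Tf_one : Tf p 1 = ∑ x, p x * Real.logb 2 (p x) := by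
  unfold Tf
  refine Finset.sum_congr rfl fun x _ => ?_
  by_cases h : p x = 0
  · simp [h]
  · rw [if_neg h, Real.rpow_one]

end tilted

/-- `sup_{0≤α≤1} (1-α)(r - H_α(p)) = inf_q [ D(q‖p) + max{0, r - H(q) - D(q‖p)} ]`. -/
theorem renyi_legendre_identity {X : Type*} [Fintype X] (p : X → ℝ) (hp : IsProb p)
    (r : ℝ) (hr : 0 ≤ r) :
    sSup {v | ∃ α ∈ Set.Icc (0:ℝ) 1, v = (1 - α) * (r - renyiEntropy α p)} =
      sInf {v | ∃ q : X → ℝ, IsProb q ∧ (∀ x, p x = 0 → q x = 0) ∧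
        v = Dkl q p + max 0 (r - shannonEntropy q - Dkl q p)} := by
  set A := {v | ∃ α ∈ Set.Icc (0:ℝ) 1, v = (1 - α) * (r - renyiEntropy α p)} with hAdef
  set B := {v | ∃ q : X → ℝ, IsProb q ∧ (∀ x, p x = 0 → q x = 0) ∧
      v = Dkl q p + max 0 (r - shannonEntropy q - Dkl q p)} with hBdef
  have hZ : ∀ β : ℝ, 0 < Zf p β := fun β => Zf_pos p β hp
  set Φ : ℝ → ℝ := fun β => -Tf p β / Zf p β with hΦ
  -- membership basics
  have hA0 : (0:ℝ) ∈ A := ⟨1, ⟨zero_le_one, le_refl 1⟩, by ring⟩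
  have hAne : A.Nonempty := ⟨0, hA0⟩
  have hBne : B.Nonempty := ⟨_, ⟨qt p 1, qt_prob p 1 hp, qt_ac p 1, rfl⟩⟩
  have hAB : ∀ a ∈ A, ∀ b ∈ B, a ≤ b := by
    rintro a ⟨α, hα, rfl⟩ b ⟨q, hq, hac, rfl⟩
    exact easy_dir p q hp hq hac r α hα
  obtain ⟨b0, hb0⟩ := hBne
  have hbddA : BddAbove A := ⟨b0, fun a ha => hAB a ha b0 hb0⟩
  have hbddB : BddBelow B := ⟨0, fun b hb => hAB 0 hA0 b hb⟩
  have hBne' : B.Nonempty := ⟨b0, hb0⟩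
  have hle : sSup A ≤ sInf B :=
    csSup_le hAne fun a ha => le_csInf hBne' fun b hb => hAB a ha b hb
  -- the value at the tilted distribution
  have hval : ∀ β : ℝ, Dkl (qt p β) p + max 0 (r - shannonEntropy (qt p β) - Dkl (qt p β) p)
      = ((β - 1) * Tf p β / Zf p β - Real.logb 2 (Zf p β)) + max 0 (r - Φ β) := by
    intro β
    rw [dkl_qt p β hp, shannon_qt p β hp]
    congr 2
    have hne := (hZ β).ne'
    rw [hΦ]
    field_simp
    ring
  have hge : sInf B ≤ sSup A := by
    by_cases hc1 : r ≤ Φ 1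
    · -- value at β = 1 is 0
      have hmax : max 0 (r - Φ 1) = 0 := max_eq_left (by linarith)
      have hv1 : Dkl (qt p 1) p + max 0 (r - shannonEntropy (qt p 1) - Dkl (qt p 1) p)
          = 0 := by
        rw [hval 1, hmax, Zf_one p hp]
        simp
      have h0B : (0:ℝ) ∈ B := ⟨qt p 1, qt_prob p 1 hp, qt_ac p 1, hv1.symm⟩
      calc sInf B ≤ 0 := csInf_le hbddB h0B
        _ ≤ sSup A := le_csSup hbddA hA0
    · by_cases hc2 : Φ 0 ≤ r
      · -- value at β = 0
        have hmax : max 0 (r - Φ 0) = r - Φ 0 := max_eq_right (by linarith)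
        have hv0 : Dkl (qt p 0) p + max 0 (r - shannonEntropy (qt p 0) - Dkl (qt p 0) p)
            = r - Real.logb 2 (Zf p 0) := by
          rw [hval 0, hmax, hΦ]
          have hne := (hZ 0).ne'
          field_simp
          ring
        have hvB : (r - Real.logb 2 (Zf p 0)) ∈ B :=
          ⟨qt p 0, qt_prob p 0 hp, qt_ac p 0, hv0.symm⟩
        have hvA : (r - Real.logb 2 (Zf p 0)) ∈ A := by
          refine ⟨0, ⟨le_refl 0, zero_le_one⟩, ?_⟩
          rw [renyiEntropy, if_neg (by norm_num : (0:ℝ) ≠ 1)]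
          rw [show (∑ x, if p x = 0 then 0 else p x ^ (0:ℝ)) = Zf p 0 from rfl]
          ring
        calc sInf B ≤ r - Real.logb 2 (Zf p 0) := csInf_le hbddB hvB
          _ ≤ sSup A := le_csSup hbddA hvA
      · -- intermediate value
        push_neg at hc1 hc2
        have hivt := intermediate_value_Icc' (zero_le_one (α := ℝ))
          ((phi_cont p hp).continuousOn)
        obtain ⟨β, hβmem, hβr0⟩ := hivt ⟨hc1.le, hc2.le⟩
        have hβr : Φ β = r := hβr0
        have hβ1 : β ≠ 1 := by
          intro h
          rw [h] at hβr
          exact absurd hβr.ge (not_le.mpr hc1)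
        have hβlt : β < 1 := lt_of_le_of_ne hβmem.2 hβ1
        have hmax : max 0 (r - Φ β) = 0 := by rw [hβr]; simp
        have hvβ : Dkl (qt p β) p + max 0 (r - shannonEntropy (qt p β) - Dkl (qt p β) p)
            = (1 - β) * r - Real.logb 2 (Zf p β) := by
          rw [hval β, hmax, add_zero]
          have h1 : (β - 1) * Tf p β / Zf p β = (1 - β) * Φ β := by
            rw [hΦ]
            field_simp
            ring
          rw [h1, hβr]
        have hvB : ((1 - β) * r - Real.logb 2 (Zf p β)) ∈ B :=
          ⟨qt p β, qt_prob p β hp, qt_ac p β, hvβ.symm⟩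
        have hvA : ((1 - β) * r - Real.logb 2 (Zf p β)) ∈ A := by
          refine ⟨β, hβmem, ?_⟩
          rw [renyiEntropy, if_neg hβ1]
          rw [show (∑ x, if p x = 0 then 0 else p x ^ β) = Zf p β from rfl]
          have h1β : (1 - β) ≠ 0 := by linarith
          field_simp
        calc sInf B ≤ (1 - β) * r - Real.logb 2 (Zf p β) := csInf_le hbddB hvB
          _ ≤ sSup A := le_csSup hbddA hvA
  linarith
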